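/- arXiv:2009.13273 — 2 statements merged into one kernel-verified Lean document; each statement's English description precedes it below -/
import Mathlib

section
/- Let X, Z be metric spaces, z₀ ∈ Z, and 0 < δ ≤ 2·d_GH(X,Z). Let Z* be Z with one extra point z* attached, where d(z*,z) = δ if d(z₀,z) ≤ δ, d(z*,z) = d(z₀,z) if d(z₀,z) > δ. Then d_GH(X, Z*) ≤ d_GH(X, Z). -/
open scoped ENNReal

/-- A correspondence between `X` and `Y`: a relation whose projections are surjective. -/
def IsCorr {X Y : Type*} (R : Set (X × Y)) : Prop :=
  (∀ x : X, ∃ y : Y, (x, y) ∈ R) ∧ (∀ y : Y, ∃ x : X, (x, y) ∈ R)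

/-- The distortion of a relation: `sup |d(x,x') - d(y,y')|` over pairs in `R`. -/
noncomputable def corrDis {X Y : Type*} [MetricSpace X] [MetricSpace Y]
    (R : Set (X × Y)) : ℝ≥0∞ :=
  ⨆ p ∈ R, ⨆ q ∈ R, edist (dist p.1 q.1) (dist p.2 q.2)

/-- The Gromov–Hausdorff distance: half the infimal distortion of correspondences. -/
noncomputable def ghDist (X Y : Type*) [MetricSpace X] [MetricSpace Y] : ℝ≥0∞ :=
  (⨅ (R : Set (X × Y)) (_ : IsCorr R), corrDis R) / 2

/-- The distance on `Z* = Z ∪ {z*}` (`z* = none`): `δ` on the closed `δ`-ball around `z₀`,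
`dist z₀ z` outside it, and the original metric on `Z`. -/
noncomputable def dStar {Z : Type*} [MetricSpace Z] (z₀ : Z) (δ : ℝ) :
    Option Z → Option Z → ℝ
  | some z, some z' => dist z z'
  | some z, none => if dist z₀ z ≤ δ then δ else dist z₀ z
  | none, some z => if dist z₀ z ≤ δ then δ else dist z₀ z
  | none, none => 0

lemma le_corrDis {X Y : Type*} [MetricSpace X] [MetricSpace Y] {R : Set (X × Y)}
    {p q : X × Y} (hp : p ∈ R) (hq : q ∈ R) :
    edist (dist p.1 q.1) (dist p.2 q.2) ≤ corrDis R :=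
  le_iSup₂_of_le p hp (le_iSup₂_of_le q hq le_rfl)

/-- Adjoining the extra point `z*` does not increase the Gromov–Hausdorff distance to `X`. -/
theorem stmt2 {X Z : Type*} [MetricSpace X] [MetricSpace Z] (z₀ : Z) (δ : ℝ)
    (hδ : 0 < δ) (hδGH : ENNReal.ofReal δ ≤ 2 * ghDist X Z)
    [MetricSpace (Option Z)] (hm : ∀ a b : Option Z, dist a b = dStar z₀ δ a b) :
    ghDist X (Option Z) ≤ ghDist X Z := by
  conv_rhs => rw [ghDist]
  rw [ENNReal.le_div_iff_mul_le (Or.inl two_ne_zero) (Or.inl (by norm_num))]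
  refine le_iInf fun R => le_iInf fun hR => ?_
  have hδR : ENNReal.ofReal δ ≤ corrDis R := by
    refine hδGH.trans ?_
    rw [ghDist, ENNReal.mul_div_cancel' (fun h => absurd h two_ne_zero) (fun h => absurd h (by norm_num))]
    exact iInf₂_le R hR
  -- the extended correspondence
  set S : Set (X × Option Z) := {p | (p.1, p.2.getD z₀) ∈ R} with hSdef
  have hScorr : IsCorr S := by
    constructor
    · intro x; obtain ⟨z, hz⟩ := hR.1 x; exact ⟨some z, hz⟩
    · rintro (_ | z)
      · obtain ⟨x, hx⟩ := hR.2 z₀; exact ⟨x, hx⟩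
      · obtain ⟨x, hx⟩ := hR.2 z; exact ⟨x, hx⟩
  -- mixed case helper
  have mixed : ∀ x x' z, (x, z) ∈ R → (x', z₀) ∈ R →
      edist (dist x x') (if dist z₀ z ≤ δ then δ else dist z₀ z) ≤ corrDis R := by
    intro x x' z h1 h2
    have base : edist (dist x x') (dist z z₀) ≤ corrDis R :=
      le_corrDis (p := (x, z)) (q := (x', z₀)) h1 h2
    have hzz : dist z z₀ = dist z₀ z := dist_comm z z₀
    split_ifs with h
    · rcases le_total (dist x x') δ with hle | hge
      · calc edist (dist x x') δ = ENNReal.ofReal |dist x x' - δ| := by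
              rw [edist_dist, Real.dist_eq]
          _ ≤ ENNReal.ofReal δ := ENNReal.ofReal_le_ofReal (by
              rw [abs_sub_comm, abs_of_nonneg (by linarith)]
              have := dist_nonneg (x := x) (y := x'); linarith)
          _ ≤ corrDis R := hδR
      · calc edist (dist x x') δ = ENNReal.ofReal |dist x x' - δ| := by
              rw [edist_dist, Real.dist_eq]
          _ ≤ ENNReal.ofReal |dist x x' - dist z z₀| := ENNReal.ofReal_le_ofReal (by
              rw [abs_of_nonneg (by linarith)]
              have h1 : dist x x' - δ ≤ dist x x' - dist z z₀ := by rw [hzz]; linarith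
              exact h1.trans (le_abs_self _))
          _ = edist (dist x x') (dist z z₀) := by rw [edist_dist, Real.dist_eq]
          _ ≤ corrDis R := base
    · rw [← hzz]; exact base
  have hSdis : corrDis S ≤ corrDis R := by
    refine iSup₂_le fun p hp => iSup₂_le fun q hq => ?_
    obtain ⟨x, o⟩ := p; obtain ⟨x', o'⟩ := q
    simp only [hSdef, Set.mem_setOf_eq] at hp hq
    match o, o' with
    | some z, some z' =>
      simp only [Option.getD_some] at hp hq
      have : dist (some z : Option Z) (some z') = dist z z' := by rw [hm]; rfl
      rw [this]
      exact le_corrDis (p := (x, z)) (q := (x', z')) hp hq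
    | some z, none =>
      simp only [Option.getD_some, Option.getD_none] at hp hq
      have : dist (some z : Option Z) none = if dist z₀ z ≤ δ then δ else dist z₀ z := by
        rw [hm]; rfl
      rw [this]
      exact mixed x x' z hp hq
    | none, some z =>
      simp only [Option.getD_some, Option.getD_none] at hp hq
      have : dist (none : Option Z) (some z) = if dist z₀ z ≤ δ then δ else dist z₀ z := by
        rw [hm]; rfl
      rw [this, dist_comm x x']
      exact mixed x' x z hq hp
    | none, none =>
      simp only [Option.getD_none] at hp hq
      have : dist (none : Option Z) none = dist z₀ z₀ := by rw [hm, dist_self]; rfl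
      rw [this]
      exact le_corrDis (p := (x, z₀)) (q := (x', z₀)) hp hq
  calc ghDist X (Option Z) * 2 ≤ corrDis S / 2 * 2 := by
        refine mul_le_mul_left ?_ 2
        exact ENNReal.div_le_div_right (iInf₂_le S hScorr) 2
    _ = corrDis S := ENNReal.div_mul_cancel two_ne_zero (by norm_num)
    _ ≤ corrDis R := hSdis
end

section
/- Let X, Y, Z be metric spaces with Z on the segment between X and Y (d_GH(X,Z) + d_GH(Z,Y) = d_GH(X,Y)), d_GH(X,Z) > 0, d_GH(Z,Y) > 0, and suppose Z has an isolated point z*. Then for 0 < μ < min{2·d_GH(X,Z), 2·d_GH(Z,Y), 2·S(z*)} and any nonempty index set I, the space W obtained from Z by replacing z* with a μ-simplex on I also satisfies d_GH(X,W) + d_GH(W,Y) = d_GH(X,Y). -/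
open scoped ENNReal

/-- The distance on `W = I ⊔ (Z ∖ {z*})`: the original metric on `Z ∖ {z*}`, `μ` between
distinct simplex vertices `i ∈ I`, and `dist z* w` between simplex vertices and `w ∈ Z ∖ {z*}`. -/
noncomputable def dW {Z : Type*} [MetricSpace Z] (zs : Z) (μ : ℝ) {I : Type*} [DecidableEq I] :
    I ⊕ {z : Z // z ≠ zs} → I ⊕ {z : Z // z ≠ zs} → ℝ
  | Sum.inl i, Sum.inl j => if i = j then 0 else μ
  | Sum.inl _, Sum.inr w => dist zs w.1
  | Sum.inr w, Sum.inl _ => dist zs w.1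
  | Sum.inr w, Sum.inr w' => dist w.1 w'.1

/-- `S(z*) = inf {d(z*,z) : z ≠ z*}`. -/
noncomputable def isolR {Z : Type*} [MetricSpace Z] (zs : Z) : ℝ :=
  sInf {r : ℝ | ∃ z : Z, z ≠ zs ∧ r = dist zs z}


lemma corrDis_bound {X Y : Type*} [MetricSpace X] [MetricSpace Y] {R : Set (X × Y)}
    {x x' : X} {y y' : Y} (h : (x, y) ∈ R) (h' : (x', y') ∈ R) :
    edist (dist x x') (dist y y') ≤ corrDis R := by
  have h1 : edist (dist x x') (dist y y') ≤ ⨆ q ∈ R, edist (dist x q.1) (dist y q.2) :=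
    le_iSup₂ (f := fun (q : X × Y) (_ : q ∈ R) => edist (dist x q.1) (dist y q.2)) (x', y') h'
  exact h1.trans (le_iSup₂
    (f := fun (p : X × Y) (_ : p ∈ R) => ⨆ q ∈ R, edist (dist p.1 q.1) (dist p.2 q.2)) (x, y) h)

lemma corrDis_le {X Y : Type*} [MetricSpace X] [MetricSpace Y] {R : Set (X × Y)} {C : ℝ≥0∞}
    (h : ∀ p ∈ R, ∀ q ∈ R, edist (dist p.1 q.1) (dist p.2 q.2) ≤ C) : corrDis R ≤ C :=
  iSup₂_le fun p hp => iSup₂_le fun q hq => h p hp q hq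

lemma ghDist_symm_le (X Y : Type*) [MetricSpace X] [MetricSpace Y] :
    ghDist Y X ≤ ghDist X Y := by
    rw [ghDist, ghDist]
    refine ENNReal.div_le_div_right (le_iInf₂ fun R hR => ?_) 2
    refine (iInf₂_le {p : Y × X | p.swap ∈ R} ⟨fun b => hR.2 b, fun a => hR.1 a⟩).trans ?_
    refine corrDis_le fun p hp q hq => ?_
    rw [edist_comm]
    exact corrDis_bound hp hq

lemma ghDist_comm (X Y : Type*) [MetricSpace X] [MetricSpace Y] :
    ghDist X Y = ghDist Y X :=
  le_antisymm (ghDist_symm_le Y X) (ghDist_symm_le X Y)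

lemma ghDist_triangle (X W Y : Type*) [MetricSpace X] [MetricSpace W] [MetricSpace Y] :
    ghDist X Y ≤ ghDist X W + ghDist W Y := by
  rw [ghDist, ghDist, ghDist, ENNReal.div_add_div_same]
  refine ENNReal.div_le_div_right ?_ 2
  rw [ENNReal.iInf_add]
  refine le_iInf fun R => ?_
  rw [ENNReal.iInf_add]
  refine le_iInf fun hR => ?_
  rw [ENNReal.add_iInf]
  refine le_iInf fun S => ?_
  rw [ENNReal.add_iInf]
  refine le_iInf fun hS => ?_
  set T : Set (X × Y) := {p | ∃ w : W, (p.1, w) ∈ R ∧ (w, p.2) ∈ S} with hT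
  have hcorr : IsCorr T := by
    constructor
    · intro x
      obtain ⟨w, hw⟩ := hR.1 x
      obtain ⟨y, hy⟩ := hS.1 w
      exact ⟨y, w, hw, hy⟩
    · intro y
      obtain ⟨w, hw⟩ := hS.2 y
      obtain ⟨x, hx⟩ := hR.2 w
      exact ⟨x, w, hx, hw⟩
  refine (iInf₂_le T hcorr).trans (corrDis_le fun p hp q hq => ?_)
  obtain ⟨w, hw1, hw2⟩ := hp
  obtain ⟨w', hw1', hw2'⟩ := hq
  exact (edist_triangle _ (dist w w') _).trans
    (add_le_add (corrDis_bound hw1 hw1') (corrDis_bound hw2 hw2'))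

lemma ghDist_simplex_le {X Z : Type*} [MetricSpace X] [MetricSpace Z] (zs : Z) (μ : ℝ)
    (hμ0 : 0 ≤ μ) {I : Type*} [DecidableEq I] [Nonempty I]
    [MetricSpace (I ⊕ {z : Z // z ≠ zs})]
    (hm : ∀ a b : I ⊕ {z : Z // z ≠ zs}, dist a b = dW zs μ a b)
    (hμ : ENNReal.ofReal μ ≤ 2 * ghDist X Z) :
    ghDist X (I ⊕ {z : Z // z ≠ zs}) ≤ ghDist X Z := by
  have h2 : 2 * ghDist X Z = ⨅ (R : Set (X × Z)) (_ : IsCorr R), corrDis R := by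
    rw [ghDist]
    exact ENNReal.mul_div_cancel two_ne_zero ENNReal.ofNat_ne_top
  rw [ghDist, ghDist]
  refine ENNReal.div_le_div_right (le_iInf₂ fun R hR => ?_) 2
  have hμR : ENNReal.ofReal μ ≤ corrDis R := hμ.trans (h2 ▸ iInf₂_le R hR)
  set R' : Set (X × (I ⊕ {z : Z // z ≠ zs})) :=
    {p | match p.2 with
         | Sum.inl _ => (p.1, zs) ∈ R
         | Sum.inr w => (p.1, w.1) ∈ R} with hR'
  have hmemL : ∀ (x : X) (i : I), (x, Sum.inl i) ∈ R' ↔ (x, zs) ∈ R := fun x i => Iff.rfl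
  have hcorr : IsCorr R' := by
    constructor
    · intro x
      obtain ⟨z, hz⟩ := hR.1 x
      by_cases hzz : z = zs
      · exact ⟨Sum.inl (Classical.arbitrary I), (hmemL _ _).2 (hzz ▸ hz)⟩
      · exact ⟨Sum.inr ⟨z, hzz⟩, hz⟩
    · rintro (i | w)
      · obtain ⟨x, hx⟩ := hR.2 zs
        exact ⟨x, hx⟩
      · obtain ⟨x, hx⟩ := hR.2 w.1
        exact ⟨x, hx⟩
  refine (iInf₂_le R' hcorr).trans (corrDis_le fun p hp q hq => ?_)
  obtain ⟨x, a⟩ := p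
  obtain ⟨x', b⟩ := q
  match a, b with
  | Sum.inl i, Sum.inl j =>
    replace hp : (x, zs) ∈ R := hp
    replace hq : (x', zs) ∈ R := hq
    have h0 : edist (dist x x') (0 : ℝ) ≤ corrDis R := by
      have := corrDis_bound hp hq
      rwa [dist_self] at this
    rw [hm]
    by_cases hij : i = j
    · simpa [dW, hij] using h0
    · simp only [dW, hij, if_false]
      have hd : ENNReal.ofReal (dist x x') ≤ corrDis R := by
        rwa [edist_dist, Real.dist_eq, sub_zero, abs_of_nonneg dist_nonneg] at h0
      rw [edist_dist, Real.dist_eq]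
      rcases le_total (dist x x') μ with h | h
      · refine le_trans ?_ hμR
        apply ENNReal.ofReal_le_ofReal
        rw [abs_of_nonpos (by linarith)]
        have := dist_nonneg (x := x) (y := x')
        linarith
      · refine le_trans ?_ hd
        apply ENNReal.ofReal_le_ofReal
        rw [abs_of_nonneg (by linarith)]
        linarith
  | Sum.inl i, Sum.inr w =>
    replace hp : (x, zs) ∈ R := hp
    replace hq : (x', w.1) ∈ R := hq
    rw [hm]
    exact corrDis_bound hp hq
  | Sum.inr w, Sum.inl i =>
    replace hp : (x, w.1) ∈ R := hp
    replace hq : (x', zs) ∈ R := hq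
    rw [hm]
    show edist (dist x x') (dist zs w.1) ≤ corrDis R
    rw [dist_comm zs w.1]
    exact corrDis_bound hp hq
  | Sum.inr w, Sum.inr w' =>
    replace hp : (x, w.1) ∈ R := hp
    replace hq : (x', w'.1) ∈ R := hq
    rw [hm]
    exact corrDis_bound hp hq

/-- If `Z` lies strictly inside the metric segment `[X,Y]` and has an isolated point `z*`,
then the space `W` obtained by replacing `z*` with a `μ`-simplex on any nonempty `I`
also lies on the segment `[X,Y]`. -/
theorem stmt7 {X Y Z : Type*} [MetricSpace X] [MetricSpace Y] [MetricSpace Z]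
    (hseg : ghDist X Z + ghDist Z Y = ghDist X Y)
    (hXZ : 0 < ghDist X Z) (hZY : 0 < ghDist Z Y)
    (zs : Z) (hiso : 0 < isolR zs) (μ : ℝ) (hμ0 : 0 < μ)
    (hμX : ENNReal.ofReal μ < 2 * ghDist X Z) (hμY : ENNReal.ofReal μ < 2 * ghDist Z Y)
    (hμS : μ < 2 * isolR zs)
    {I : Type*} [DecidableEq I] [Nonempty I]
    [MetricSpace (I ⊕ {z : Z // z ≠ zs})]
    (hm : ∀ a b : I ⊕ {z : Z // z ≠ zs}, dist a b = dW zs μ a b) :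
    ghDist X (I ⊕ {z : Z // z ≠ zs}) + ghDist (I ⊕ {z : Z // z ≠ zs}) Y = ghDist X Y := by
  have h1 : ghDist X (I ⊕ {z : Z // z ≠ zs}) ≤ ghDist X Z :=
    ghDist_simplex_le zs μ hμ0.le hm hμX.le
  have h2 : ghDist (I ⊕ {z : Z // z ≠ zs}) Y ≤ ghDist Z Y := by
    rw [ghDist_comm, ghDist_comm Z Y]
    exact ghDist_simplex_le zs μ hμ0.le hm (by rw [← ghDist_comm Z Y]; exact hμY.le)
  exact le_antisymm (hseg ▸ add_le_add h1 h2) (ghDist_triangle X _ Y)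
end
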